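/- Let Y ∈ [0,1] be a random variable and X a random vector with values in [0,1]^d. Suppose μ(x) = E[Y|X=x] takes values in [0,1] and is (β,L)-Hölder continuous, and σ²(x) = Var(Y|X=x) is (β,L)-Hölder continuous. Let B ⊆ [0,1]^d have positive probability and diameter V. Define μ̄ = E[Y | X∈B] and σ̄² = Var(Y | X∈B). Then for every x ∈ B, |σ²(x) - σ̄²| ≤ 5L·V^β. -/

import Mathlib

open MeasureTheory

/-- if the conditional mean `μ` and conditional variance `σ²` of a
`[0,1]`-valued outcome `Y` given covariates `X ∈ [0,1]^d` are (β,L)-Hölder, then the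
conditional variance at any `x` in a group `B` of diameter `V` differs from the
group variance `Var(Y | X ∈ B)` by at most `5 L V ^ β`. -/
theorem conditional_variance_approximation {d : ℕ} {Ω : Type*} [MeasurableSpace Ω]
    (P : Measure Ω) [IsProbabilityMeasure P]
    (X : Ω → EuclideanSpace ℝ (Fin d)) (Y : Ω → ℝ)
    (hX : Measurable X) (hY : Measurable Y)
    (hXc : ∀ ω, ∀ i, X ω i ∈ Set.Icc (0:ℝ) 1)
    (hY01 : ∀ ω, Y ω ∈ Set.Icc (0:ℝ) 1)
    (β L : ℝ) (hβ : β ∈ Set.Ioc (0:ℝ) 1) (hL : 0 < L)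
    (μ σ2 : EuclideanSpace ℝ (Fin d) → ℝ) (hμm : Measurable μ) (hσm : Measurable σ2)
    (hμ01 : ∀ x : EuclideanSpace ℝ (Fin d), (∀ i, x i ∈ Set.Icc (0:ℝ) 1) →
      μ x ∈ Set.Icc (0:ℝ) 1)
    (hσ01 : ∀ x : EuclideanSpace ℝ (Fin d), (∀ i, x i ∈ Set.Icc (0:ℝ) 1) →
      σ2 x ∈ Set.Icc (0:ℝ) 1)
    (hμH : ∀ x y : EuclideanSpace ℝ (Fin d), (∀ i, x i ∈ Set.Icc (0:ℝ) 1) →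
      (∀ i, y i ∈ Set.Icc (0:ℝ) 1) → |μ x - μ y| ≤ L * ‖x - y‖ ^ β)
    (hσH : ∀ x y : EuclideanSpace ℝ (Fin d), (∀ i, x i ∈ Set.Icc (0:ℝ) 1) →
      (∀ i, y i ∈ Set.Icc (0:ℝ) 1) → |σ2 x - σ2 y| ≤ L * ‖x - y‖ ^ β)
    (B : Set (EuclideanSpace ℝ (Fin d))) (hBm : MeasurableSet B)
    (hBsub : B ⊆ {x | ∀ i, x i ∈ Set.Icc (0:ℝ) 1})
    (hBpos : 0 < Measure.map X P B)
    -- `μ` is the conditional mean of `Y` given `X`, and `σ² + μ²` is the conditional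
    -- second moment of `Y` given `X` (expressed on the group `B`):
    (hcond1 : ∫ ω in X ⁻¹' B, Y ω ∂P = ∫ x in B, μ x ∂(Measure.map X P))
    (hcond2 : ∫ ω in X ⁻¹' B, (Y ω) ^ 2 ∂P
      = ∫ x in B, (σ2 x + (μ x) ^ 2) ∂(Measure.map X P)) :
    ∀ x ∈ B,
      |σ2 x -
        (((Measure.map X P) B).toReal⁻¹ * ∫ ω in X ⁻¹' B, (Y ω) ^ 2 ∂P -
          (((Measure.map X P) B).toReal⁻¹ * ∫ ω in X ⁻¹' B, Y ω ∂P) ^ 2)|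
        ≤ 5 * L * Metric.diam B ^ β := by
  intro x hx
  have hνprob : IsProbabilityMeasure (Measure.map X P) :=
    Measure.isProbabilityMeasure_map hX.aemeasurable
  rw [hcond1, hcond2]
  set ν := Measure.map X P with hνdef
  set p := (ν B).toReal with hpdef
  have hpfin : ν B ≠ ⊤ := measure_ne_top ν B
  have hppos : 0 < p := ENNReal.toReal_pos hBpos.ne' hpfin
  have hβpos : 0 < β := hβ.1
  set K := L * Metric.diam B ^ β with hK
  have hKnn : 0 ≤ K := mul_nonneg hL.le (Real.rpow_nonneg Metric.diam_nonneg β)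
  -- B is bounded
  have hBbdd : Bornology.IsBounded B := by
    refine (Metric.isBounded_closedBall (x := (0 : EuclideanSpace ℝ (Fin d)))
      (r := Real.sqrt d)).subset ?_
    intro y hy
    have hy' := hBsub hy
    simp only [Metric.mem_closedBall, dist_zero_right]
    rw [EuclideanSpace.norm_eq]
    apply Real.sqrt_le_sqrt
    calc ∑ i, ‖y i‖ ^ 2 ≤ ∑ _i : Fin d, (1 : ℝ) := by
          apply Finset.sum_le_sum
          intro i _
          have := hy' i
          have h1 : |y i| ≤ 1 := abs_le.2 ⟨by linarith [this.1], this.2⟩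
          calc ‖y i‖ ^ 2 = |y i| ^ 2 := by rw [Real.norm_eq_abs]
            _ ≤ 1 ^ 2 := pow_le_pow_left₀ (abs_nonneg _) h1 2
            _ = 1 := one_pow 2
      _ = (d : ℝ) := by simp
  have hdist : ∀ y ∈ B, ∀ z ∈ B, L * ‖y - z‖ ^ β ≤ K := by
    intro y hy z hz
    refine mul_le_mul_of_nonneg_left ?_ hL.le
    refine Real.rpow_le_rpow (norm_nonneg _) ?_ hβpos.le
    rw [← dist_eq_norm]
    exact Metric.dist_le_diam_of_mem hBbdd hy hz
  have hσx : ∀ y ∈ B, |σ2 x - σ2 y| ≤ K := fun y hy =>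
    (hσH x y (hBsub hx) (hBsub hy)).trans (hdist x hx y hy)
  have hμx : ∀ y ∈ B, |μ x - μ y| ≤ K := fun y hy =>
    (hμH x y (hBsub hx) (hBsub hy)).trans (hdist x hx y hy)
  -- integrability of bounded measurable functions on B
  have hint : ∀ (f : EuclideanSpace ℝ (Fin d) → ℝ) (C : ℝ), Measurable f →
      (∀ y ∈ B, |f y| ≤ C) → IntegrableOn f B ν := by
    intro f C hf hbd
    refine Integrable.mono' (integrable_const C) hf.aestronglyMeasurable ?_
    exact (ae_restrict_iff' hBm).2 (ae_of_all _ fun y hy => by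
      simpa [Real.norm_eq_abs] using hbd y hy)
  have habs01 : ∀ (t : ℝ), t ∈ Set.Icc (0:ℝ) 1 → |t| ≤ 1 := fun t ht =>
    abs_le.2 ⟨by linarith [ht.1], ht.2⟩
  have intμ : IntegrableOn μ B ν :=
    hint μ 1 hμm fun y hy => habs01 _ (hμ01 y (hBsub hy))
  have intσ : IntegrableOn σ2 B ν :=
    hint σ2 1 hσm fun y hy => habs01 _ (hσ01 y (hBsub hy))
  have intμ2 : IntegrableOn (fun y => (μ y) ^ 2) B ν := by
    refine hint _ 1 (hμm.pow_const 2) fun y hy => ?_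
    have h1 := habs01 _ (hμ01 y (hBsub hy))
    calc |(μ y) ^ 2| = |μ y| ^ 2 := by rw [abs_pow]
      _ ≤ 1 ^ 2 := pow_le_pow_left₀ (abs_nonneg _) h1 2
      _ = 1 := one_pow 2
  have intc : ∀ c : ℝ, IntegrableOn (fun _ => c) B ν := fun c =>
    integrableOn_const (measure_ne_top ν B)
  set A := ∫ y in B, μ y ∂ν with hA
  set S := ∫ y in B, σ2 y ∂ν with hS
  set Q := ∫ y in B, (μ y) ^ 2 ∂ν with hQ
  have hsplit : ∫ y in B, (σ2 y + (μ y) ^ 2) ∂ν = S + Q := integral_add intσ intμ2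
  -- bound 1: |p * σ2 x - S| ≤ K * p
  have e1 : ∫ y in B, (σ2 x - σ2 y) ∂ν = p * σ2 x - S := by
    rw [integral_sub (intc _) intσ, setIntegral_const, smul_eq_mul]; rfl
  have b1 : |p * σ2 x - S| ≤ K * p := by
    rw [← e1, ← Real.norm_eq_abs]
    exact norm_setIntegral_le_of_norm_le_const_ae' (measure_lt_top ν B)
      (ae_of_all _ fun y hy => by simpa [Real.norm_eq_abs] using hσx y hy)
  -- bound 2: |p * μ x - A| ≤ K * p
  have e2 : ∫ y in B, (μ x - μ y) ∂ν = p * μ x - A := by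
    rw [integral_sub (intc _) intμ, setIntegral_const, smul_eq_mul]; rfl
  have b2 : |p * μ x - A| ≤ K * p := by
    rw [← e2, ← Real.norm_eq_abs]
    exact norm_setIntegral_le_of_norm_le_const_ae' (measure_lt_top ν B)
      (ae_of_all _ fun y hy => by simpa [Real.norm_eq_abs] using hμx y hy)
  -- bound 3: |Q - p * μ x ^ 2| ≤ (2 * K) * p
  have e3 : ∫ y in B, ((μ y) ^ 2 - (μ x) ^ 2) ∂ν = Q - p * (μ x) ^ 2 := by
    rw [integral_sub intμ2 (intc _), setIntegral_const, smul_eq_mul]; rfl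
  have b3 : |Q - p * (μ x) ^ 2| ≤ (2 * K) * p := by
    rw [← e3, ← Real.norm_eq_abs]
    refine norm_setIntegral_le_of_norm_le_const_ae' (measure_lt_top ν B)
      (ae_of_all _ fun y hy => ?_)
    have h1 := habs01 _ (hμ01 y (hBsub hy))
    have h2 := habs01 _ (hμ01 x (hBsub hx))
    have hsum : |μ y + μ x| ≤ 2 := (abs_add_le _ _).trans (by linarith)
    have hdiff : |μ y - μ x| ≤ K := by rw [abs_sub_comm]; exact hμx y hy
    calc ‖(μ y) ^ 2 - (μ x) ^ 2‖ = |(μ y + μ x) * (μ y - μ x)| := by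
          rw [Real.norm_eq_abs, sq_sub_sq]
      _ = |μ y + μ x| * |μ y - μ x| := abs_mul _ _
      _ ≤ 2 * K := mul_le_mul hsum hdiff (abs_nonneg _) (by norm_num)
  -- bounds on A
  have hAnn : 0 ≤ A := setIntegral_nonneg hBm fun y hy => (hμ01 y (hBsub hy)).1
  have hAle : A ≤ p := by
    have := setIntegral_mono_on intμ (intc 1) hBm fun y hy => (hμ01 y (hBsub hy)).2
    rwa [setIntegral_const, smul_eq_mul, mul_one] at this
  have hμx01 := hμ01 x (hBsub hx)
  have hpAle : p⁻¹ * A ≤ 1 := by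
    rw [inv_mul_le_iff₀ hppos, mul_one]; exact hAle
  have hpAnn : 0 ≤ p⁻¹ * A := mul_nonneg (inv_nonneg.2 hppos.le) hAnn
  -- assemble
  have t1 : |p⁻¹ * (p * σ2 x - S)| ≤ K := by
    rw [abs_mul, abs_of_nonneg (inv_nonneg.2 hppos.le)]
    calc p⁻¹ * |p * σ2 x - S| ≤ p⁻¹ * (K * p) := by
          exact mul_le_mul_of_nonneg_left b1 (inv_nonneg.2 hppos.le)
      _ = K := by field_simp
  have t2 : |p⁻¹ * A - μ x| ≤ K := by
    have : p⁻¹ * A - μ x = -(p⁻¹ * (p * μ x - A)) := by field_simp; ring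
    rw [this, abs_neg, abs_mul, abs_of_nonneg (inv_nonneg.2 hppos.le)]
    calc p⁻¹ * |p * μ x - A| ≤ p⁻¹ * (K * p) :=
          mul_le_mul_of_nonneg_left b2 (inv_nonneg.2 hppos.le)
      _ = K := by field_simp
  have t3 : |p⁻¹ * A + μ x| ≤ 2 := by
    rw [abs_of_nonneg (by linarith [hμx01.1])]
    linarith [hμx01.2]
  have t4 : |p⁻¹ * (Q - p * (μ x) ^ 2)| ≤ 2 * K := by
    rw [abs_mul, abs_of_nonneg (inv_nonneg.2 hppos.le)]
    calc p⁻¹ * |Q - p * (μ x) ^ 2| ≤ p⁻¹ * ((2 * K) * p) :=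
          mul_le_mul_of_nonneg_left b3 (inv_nonneg.2 hppos.le)
      _ = 2 * K := by field_simp
  have key : σ2 x - (p⁻¹ * (∫ y in B, (σ2 y + (μ y) ^ 2) ∂ν) - (p⁻¹ * A) ^ 2)
      = p⁻¹ * (p * σ2 x - S) + (p⁻¹ * A - μ x) * (p⁻¹ * A + μ x)
        - p⁻¹ * (Q - p * (μ x) ^ 2) := by
    rw [hsplit]; field_simp; ring
  have h5 : 5 * L * Metric.diam B ^ β = 5 * K := by rw [hK]; ring
  rw [key, h5]
  calc |p⁻¹ * (p * σ2 x - S) + (p⁻¹ * A - μ x) * (p⁻¹ * A + μ x)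
        - p⁻¹ * (Q - p * (μ x) ^ 2)|
      ≤ |p⁻¹ * (p * σ2 x - S) + (p⁻¹ * A - μ x) * (p⁻¹ * A + μ x)|
        + |p⁻¹ * (Q - p * (μ x) ^ 2)| := abs_sub _ _
    _ ≤ |p⁻¹ * (p * σ2 x - S)| + |(p⁻¹ * A - μ x) * (p⁻¹ * A + μ x)|
        + |p⁻¹ * (Q - p * (μ x) ^ 2)| := by
          gcongr; exact abs_add_le _ _
    _ ≤ K + K * 2 + 2 * K := by
          have h2 : |(p⁻¹ * A - μ x) * (p⁻¹ * A + μ x)| ≤ K * 2 := by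
            rw [abs_mul]; exact mul_le_mul t2 t3 (abs_nonneg _) hKnn
          exact add_le_add (add_le_add t1 h2) t4
    _ = 5 * K := by ring
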